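/- Let ρ₀ > 0, G₀ > 0, C₀ = G₀/ρ₀, and let ρ : [0,∞) → (0,∞), G : [0,∞) → ℝ satisfy G = C₀ρ and ρ' = −C₀ρ² + ρ·h with continuous h satisfying 0 ≤ h(t) ≤ γ. Then G(t) ≤ max{G₀, γ} for all t ≥ 0. -/

import Mathlib

theorem G_bound_from_ratio
    (ρ₀ G₀ C₀ γ : ℝ) (hρ₀ : 0 < ρ₀) (hG₀ : 0 < G₀) (hC : C₀ = G₀ / ρ₀)
    (ρ G h : ℝ → ℝ) (hcont : Continuous h)
    (hh : ∀ t, 0 ≤ t → 0 ≤ h t ∧ h t ≤ γ)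
    (hρpos : ∀ t, 0 ≤ t → 0 < ρ t) (hρ0 : ρ 0 = ρ₀) (hG0 : G 0 = G₀)
    (hGρ : ∀ t, 0 ≤ t → G t = C₀ * ρ t)
    (hderiv : ∀ t, 0 ≤ t → HasDerivAt ρ (-C₀ * (ρ t) ^ 2 + ρ t * h t) t) :
    ∀ t, 0 ≤ t → G t ≤ max G₀ γ := by
  have hC0 : 0 < C₀ := hC ▸ div_pos hG₀ hρ₀
  set M : ℝ := max ρ₀ (γ / C₀) with hM
  -- continuity of ρ on [0, ∞)
  have hρcont : ∀ t, 0 ≤ t → ContinuousAt ρ t := fun t ht =>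
    (hderiv t ht).continuousAt
  -- main claim: ρ t ≤ M for t ≥ 0
  have key : ∀ t, 0 ≤ t → ρ t ≤ M := by
    intro t₀ ht₀
    by_contra hcon
    push_neg at hcon
    have ht0ne : ρ 0 ≤ M := by rw [hρ0]; exact le_max_left _ _
    have ht₀pos : 0 < t₀ := by
      rcases lt_or_eq_of_le ht₀ with h' | h'
      · exact h'
      · exfalso; rw [← h'] at hcon; exact absurd ht0ne (not_le.mpr hcon)
    set S : Set ℝ := {s ∈ Set.Icc (0:ℝ) t₀ | ρ s ≤ M} with hS
    have hScont : ContinuousOn ρ (Set.Icc (0:ℝ) t₀) := fun x hx =>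
      (hρcont x hx.1).continuousWithinAt
    have hSclosed : IsClosed S := by
      have : S = Set.Icc (0:ℝ) t₀ ∩ ρ ⁻¹' Set.Iic M := by
        ext x; simp [hS, Set.mem_setOf_eq, and_comm]
      rw [this]
      exact hScont.preimage_isClosed_of_isClosed isClosed_Icc isClosed_Iic
    have hSne : S.Nonempty := ⟨0, ⟨le_refl 0, le_of_lt ht₀pos⟩, ht0ne⟩
    have hSbdd : BddAbove S := ⟨t₀, fun x hx => hx.1.2⟩
    set s := sSup S with hs
    have hsmem : s ∈ S := hSclosed.csSup_mem hSne hSbdd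
    have hs0 : 0 ≤ s := hsmem.1.1
    have hst₀ : s ≤ t₀ := hsmem.1.2
    have hρs : ρ s ≤ M := hsmem.2
    have hslt : s < t₀ := by
      rcases lt_or_eq_of_le hst₀ with h' | h'
      · exact h'
      · exfalso; rw [h'] at hρs; exact absurd hρs (not_le.mpr hcon)
    -- on (s, t₀], ρ > M
    have habove : ∀ x ∈ Set.Ioc s t₀, M < ρ x := by
      intro x hx
      by_contra hle
      push_neg at hle
      have : x ∈ S := ⟨⟨le_trans hs0 (le_of_lt hx.1), hx.2⟩, hle⟩
      exact absurd (le_csSup hSbdd this) (not_le.mpr hx.1)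
    -- strict antitone on [s, t₀]
    have hanti : StrictAntiOn ρ (Set.Icc s t₀) := by
      apply StrictAntiOn.mono (s := Set.Icc s t₀) ?_ (le_refl _)
      apply strictAntiOn_of_deriv_neg (convex_Icc s t₀)
      · exact hScont.mono (Set.Icc_subset_Icc_left hs0)
      · intro x hx
        rw [interior_Icc] at hx
        have hx0 : 0 ≤ x := le_trans hs0 (le_of_lt hx.1)
        have hρx : M < ρ x := habove x ⟨hx.1, le_of_lt hx.2⟩
        have hd := (hderiv x hx0).deriv
        rw [hd]
        have hρxpos : 0 < ρ x := hρpos x hx0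
        have hγ : γ < C₀ * ρ x := by
          have : γ / C₀ < ρ x := lt_of_le_of_lt (le_max_right _ _) hρx
          calc γ = C₀ * (γ / C₀) := by field_simp
          _ < C₀ * ρ x := by exact (mul_lt_mul_iff_right₀ hC0).mpr this
        have hhx : h x ≤ γ := (hh x hx0).2
        nlinarith
    have : ρ t₀ < ρ s := hanti ⟨le_refl s, hst₀⟩ ⟨le_of_lt hslt, le_refl t₀⟩ hslt
    linarith [hcon, hρs]
  intro t ht
  rw [hGρ t ht]
  have : C₀ * ρ t ≤ C₀ * M := (mul_le_mul_iff_right₀ hC0).mpr (key t ht)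
  refine le_trans this ?_
  have hmax : C₀ * M = max (C₀ * ρ₀) (C₀ * (γ / C₀)) := by
    rw [hM]; exact mul_max_of_nonneg _ _ (le_of_lt hC0)
  rw [hmax]
  have h1 : C₀ * ρ₀ = G₀ := by rw [hC]; field_simp
  have h2 : C₀ * (γ / C₀) = γ := by field_simp
  rw [h1, h2]
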